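/- Let N be a finite set (the parties). Let x, x' : N → {0,1} denote the opinions of the parties before and after one round of Snowball, and let c, c' : N → ℤ denote the corresponding values of cnt(1) − cnt(0) before and after the round. Assume: (i) for every j ∈ N, c'(j) ∈ {c(j)−1, c(j), c(j)+1}; (ii) for every j, c(j) > 0 implies x(j) = 1 and c(j) < 0 implies x(j) = 0, and likewise c'(j) > 0 implies x'(j) = 1 and c'(j) < 0 implies x'(j) = 0; (iii) for every j, c'(j) = 0 implies x'(j) = x(j). Then ∑_{j∈N} x'(j) − ∑_{j∈N} x(j) = |{j : c(j) = 0 ∧ x(j) = 0 ∧ c'(j) = 1}| − |{j : c(j) = 0 ∧ x(j) = 1 ∧ c'(j) = −1}|. In words: the absolute progress Δ of a Snowball round equals |Λ^1| − |Λ^0|, where Λ^1 (resp. Λ^0) is the set of parties moving from L^{0,0} to L^{1} (resp. from L^{0,1} to L^{−1}). -/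
import Mathlib

open Finset

/-- the absolute progress of one Snowball round equals
`|Λ¹| − |Λ⁰|`, where `Λ¹` is the set of parties moving from `L^{0,0}` to `L¹`
and `Λ⁰` is the set of parties moving from `L^{0,1}` to `L^{−1}`. -/
theorem snowball_progress {N : Type*} [Fintype N] [DecidableEq N]
    (x x' : N → ℕ) (c c' : N → ℤ)
    (hx : ∀ j, x j = 0 ∨ x j = 1) (hx' : ∀ j, x' j = 0 ∨ x' j = 1)
    (hstep : ∀ j, c' j = c j - 1 ∨ c' j = c j ∨ c' j = c j + 1)
    (hpos : ∀ j, 0 < c j → x j = 1) (hneg : ∀ j, c j < 0 → x j = 0)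
    (hpos' : ∀ j, 0 < c' j → x' j = 1) (hneg' : ∀ j, c' j < 0 → x' j = 0)
    (hzero' : ∀ j, c' j = 0 → x' j = x j) :
    (∑ j, (x' j : ℤ)) - (∑ j, (x j : ℤ))
      = ((univ.filter (fun j => c j = 0 ∧ x j = 0 ∧ c' j = 1)).card : ℤ)
        - ((univ.filter (fun j => c j = 0 ∧ x j = 1 ∧ c' j = -1)).card : ℤ) := by
  have key : ∀ j, (x' j : ℤ) - (x j : ℤ)
      = (if c j = 0 ∧ x j = 0 ∧ c' j = 1 then (1:ℤ) else 0)
        - (if c j = 0 ∧ x j = 1 ∧ c' j = -1 then (1:ℤ) else 0) := by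
    intro j
    have h1 := hx j; have h2 := hx' j; have h3 := hstep j
    have h4 := hpos j; have h5 := hneg j; have h6 := hpos' j
    have h7 := hneg' j; have h8 := hzero' j
    split_ifs <;> omega
  calc (∑ j, (x' j : ℤ)) - (∑ j, (x j : ℤ))
      = ∑ j, ((x' j : ℤ) - (x j : ℤ)) := by rw [Finset.sum_sub_distrib]
    _ = ∑ j, ((if c j = 0 ∧ x j = 0 ∧ c' j = 1 then (1:ℤ) else 0)
        - (if c j = 0 ∧ x j = 1 ∧ c' j = -1 then (1:ℤ) else 0)) := by
          exact Finset.sum_congr rfl fun j _ => key j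
    _ = _ := by
          rw [Finset.sum_sub_distrib, Finset.sum_boole, Finset.sum_boole]
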